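/- Under the three-point distribution with P(X=±1)=(1-δ)/2, P(X=0)=δ, and loss ℓ(θ,x)=|θ-x|-|x| on Θ=[-1,1]: if the number of sample points equal to +1 strictly exceeds the number equal to -1 plus the number equal to 0, then the empirical risk minimizer θ̂ = argmin_{θ∈[-1,1]} (1/n)∑|θ - Xᵢ| equals 1, and R(1) - R(0) = δ. -/

import Mathlib

open Finset
open scoped Classical

/-- The population risk `R(θ) = δ|θ| + ((1-δ)/2)(|θ-1| + |θ+1|) - (1-δ)`. -/
noncomputable def popRisk (δ θ : ℝ) : ℝ :=
  δ * |θ| + ((1 - δ) / 2) * (|θ - 1| + |θ + 1|) - (1 - δ)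

theorem erm_pushed_to_boundary (n : ℕ) (hn : 0 < n) (δ : ℝ) (hδ : δ ∈ Set.Icc (0 : ℝ) 1)
    (x : Fin n → ℝ) (hx : ∀ i, x i = -1 ∨ x i = 0 ∨ x i = 1)
    (hcount : (Finset.univ.filter fun i => x i = 1).card >
      (Finset.univ.filter fun i => x i = -1).card +
        (Finset.univ.filter fun i => x i = 0).card) :
    (∀ θ ∈ Set.Icc (-1 : ℝ) 1, θ ≠ 1 →
      (1 / n) * ∑ i, |1 - x i| < (1 / n) * ∑ i, |θ - x i|) ∧
    popRisk δ 1 - popRisk δ 0 = δ := by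
  constructor
  · intro θ hθ hθ1
    have hθl : (-1 : ℝ) ≤ θ := hθ.1
    have hθu : θ ≤ 1 := hθ.2
    have hθlt : θ < 1 := lt_of_le_of_ne hθu hθ1
    have hnpos : (0 : ℝ) < 1 / n := by positivity
    apply mul_lt_mul_of_pos_left _ hnpos
    -- per-term bound
    have hterm : ∀ i, (if x i = 1 then 1 - θ else θ - 1) ≤ |θ - x i| - |1 - x i| := by
      intro i
      rcases hx i with h | h | h
      · have : ¬ x i = 1 := by rw [h]; norm_num
        rw [if_neg this, h]
        have h1 : |θ - (-1)| = θ + 1 := by rw [abs_of_nonneg (by linarith)]; ring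
        have h2 : |(1 : ℝ) - (-1)| = 2 := by norm_num
        rw [h1, h2]; ring_nf; linarith
      · have : ¬ x i = 1 := by rw [h]; norm_num
        rw [if_neg this, h]
        have h2 : |(1 : ℝ) - 0| = 1 := by norm_num
        rw [h2, sub_zero]
        have := le_abs_self θ
        linarith
      · rw [if_pos h, h]
        have h1 : |θ - 1| = 1 - θ := by rw [abs_of_nonpos (by linarith)]; ring
        rw [h1]; simp
    have hsum : ∑ i, (if x i = 1 then (1 : ℝ) - θ else θ - 1) ≤
        ∑ i, (|θ - x i| - |1 - x i|) := Finset.sum_le_sum fun i _ => hterm i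
    -- compute the left sum
    set c1 := (Finset.univ.filter fun i => x i = 1).card with hc1
    set cn := (Finset.univ.filter fun i => x i = -1).card with hcn
    set c0 := (Finset.univ.filter fun i => x i = 0).card with hc0
    have hsplit : ∑ i, (if x i = 1 then (1 : ℝ) - θ else θ - 1)
        = c1 * (1 - θ) + ((Finset.univ.filter fun i => ¬ x i = 1).card : ℝ) * (θ - 1) := by
      rw [Finset.sum_ite, Finset.sum_const, Finset.sum_const]
      simp [mul_comm, hc1]
    have hcompl : (Finset.univ.filter fun i => ¬ x i = 1) =
        (Finset.univ.filter fun i => x i = -1) ∪ (Finset.univ.filter fun i => x i = 0) := by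
      ext i
      simp only [Finset.mem_filter, Finset.mem_union, Finset.mem_univ, true_and]
      constructor
      · intro h; rcases hx i with h' | h' | h' <;> simp [h'] at h ⊢
      · intro h; rcases h with h | h <;> rw [h] <;> norm_num
    have hdisj : Disjoint (Finset.univ.filter fun i => x i = -1)
        (Finset.univ.filter fun i => x i = 0) := by
      rw [Finset.disjoint_filter]
      intro i _ h; rw [h]; norm_num
    have hcard : (Finset.univ.filter fun i => ¬ x i = 1).card = cn + c0 := by
      rw [hcompl, Finset.card_union_of_disjoint hdisj]
    have hc : (cn : ℝ) + c0 + 1 ≤ c1 := by exact_mod_cast hcount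
    have hpos : 0 < ∑ i, (if x i = 1 then (1 : ℝ) - θ else θ - 1) := by
      rw [hsplit, hcard]
      push_cast
      nlinarith
    have : 0 < ∑ i, (|θ - x i| - |1 - x i|) := lt_of_lt_of_le hpos hsum
    rw [Finset.sum_sub_distrib] at this
    linarith
  · simp [popRisk, abs_of_nonneg, show |(1:ℝ) - 1| = 0 by norm_num,
      show |(1:ℝ) + 1| = 2 by norm_num, show |(0:ℝ) - 1| = 1 by norm_num,
      show |(0:ℝ) + 1| = 1 by norm_num]
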